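/- In the zero-sum matrix game where the defender chooses S with |S| ≤ b₁, the attacker chooses T with |T| ≤ b₂, and the attacker's payoff is |T| − F(S,T), if b₁ < n* (size of a minimum set cover) and b₂ ≤ m* (size of a maximum set packing), then the value v of the game (attacker's equilibrium payoff) satisfies max{0, b₂(1 − b₁/m*)} ≤ v ≤ b₂(1 − b₁/n*). -/

import Mathlib

open Finset

/-- Attacker's expected payoff `U₂(σ¹,σ²) = E[|T| − F(S,T)]` in the network
inspection game. -/
noncomputable def attackerPayoff {V E : Type*} [DecidableEq V] [DecidableEq E]
    [Fintype V] [Fintype E] (C : V → Finset E)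
    (σ1 : Finset V → ℝ) (σ2 : Finset E → ℝ) : ℝ :=
  ∑ S : Finset V, ∑ T : Finset E,
    σ1 S * σ2 T * ((T.card : ℝ) - ((S.biUnion C ∩ T).card : ℝ))

/-- A mixed strategy over the subsets of a finite type, with support restricted
to subsets of size at most `b`. -/
def IsMixed {α : Type*} [Fintype α] [DecidableEq α] (b : ℕ) (σ : Finset α → ℝ) : Prop :=
  (∀ A, 0 ≤ σ A) ∧ (∑ A : Finset α, σ A = 1) ∧ (∀ A, σ A ≠ 0 → A.card ≤ b)

/-- Bounds on the value of the zero-sum inspection game: at any Nash equilibrium,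
when `b₁ < n*` and `b₂ ≤ m*`, the attacker's equilibrium payoff `v` satisfies
`max{0, b₂(1 − b₁/m*)} ≤ v ≤ b₂(1 − b₁/n*)`. -/
lemma nat_identity (n k : ℕ) (hk : k ≤ n) (hn : 1 ≤ n) :
    n * (n.choose k - (n-1).choose k) = k * n.choose k := by
  match n, hn with
  | m+1, _ =>
  cases k with
  | zero => simp
  | succ j =>
    have h2 : (m+1).choose (j+1) - (m+1-1).choose (j+1) = m.choose j := by
      have h := Nat.choose_succ_succ' m j
      simp only [Nat.add_sub_cancel]; omega
    rw [h2]
    have := Nat.add_one_mul_choose_eq m j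
    rw [this, Nat.mul_comm]

lemma card_filter_mem {α : Type*} [DecidableEq α] (A : Finset α) (a : α) (ha : a ∈ A) (k : ℕ) :
    ((A.powersetCard k).filter (fun B => a ∈ B)).card
      = A.card.choose k - (A.card - 1).choose k := by
  have h1 : (A.powersetCard k).filter (fun B => a ∉ B) = (A.erase a).powersetCard k := by
    ext B
    simp only [Finset.mem_filter, Finset.mem_powersetCard, Finset.subset_erase]
    tauto
  have h2 := Finset.card_filter_add_card_filter_not (s := A.powersetCard k)
    (p := fun B => a ∈ B)
  rw [h1] at h2
  rw [Finset.card_powersetCard, Finset.card_erase_of_mem ha] at h2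
  rw [Finset.card_powersetCard] at h2
  omega

lemma uniform_isMixed {α : Type*} [Fintype α] [DecidableEq α] (A : Finset α) (b : ℕ)
    (hb : b ≤ A.card) :
    IsMixed b (fun B => if B ∈ A.powersetCard b then ((A.powersetCard b).card : ℝ)⁻¹ else 0) := by
  have hpos : 0 < (A.powersetCard b).card := by
    rw [Finset.card_powersetCard]; exact Nat.choose_pos hb
  have hne : ((A.powersetCard b).card : ℝ) ≠ 0 := by positivity
  refine ⟨fun B => by dsimp; split <;> positivity, ?_, fun B hB => ?_⟩
  · rw [Finset.sum_ite_mem, Finset.univ_inter, Finset.sum_const, nsmul_eq_mul,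
      mul_inv_cancel₀ hne]
  · by_cases h : B ∈ A.powersetCard b
    · exact le_of_eq (Finset.mem_powersetCard.mp h).2
    · simp [h] at hB

/-- payoff against a uniform attacker strategy -/
lemma payoff_uniform_right {V E : Type*} [DecidableEq V] [DecidableEq E]
    [Fintype V] [Fintype E] (C : V → Finset E) (σ1 : Finset V → ℝ) (P : Finset (Finset E)) :
    attackerPayoff C σ1 (fun T => if T ∈ P then ((P.card : ℝ))⁻¹ else 0)
      = ∑ S : Finset V, σ1 S * ((P.card : ℝ)⁻¹ *
          ∑ T ∈ P, ((T.card : ℝ) - ((S.biUnion C ∩ T).card : ℝ))) := by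
  unfold attackerPayoff
  refine Finset.sum_congr rfl fun S _ => ?_
  rw [Finset.mul_sum, Finset.mul_sum]
  calc ∑ T : Finset E, σ1 S * (if T ∈ P then ((P.card : ℝ))⁻¹ else 0) *
        ((T.card : ℝ) - ((S.biUnion C ∩ T).card : ℝ))
      = ∑ T : Finset E, (if T ∈ P then
          σ1 S * ((P.card : ℝ)⁻¹ * ((T.card : ℝ) - ((S.biUnion C ∩ T).card : ℝ))) else 0) := by
        refine Finset.sum_congr rfl fun T _ => ?_
        split <;> ring
    _ = ∑ T ∈ Finset.univ ∩ P,
          σ1 S * ((P.card : ℝ)⁻¹ * ((T.card : ℝ) - ((S.biUnion C ∩ T).card : ℝ))) :=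
        Finset.sum_ite_mem _ _ _
    _ = _ := by rw [Finset.univ_inter]

lemma payoff_uniform_left {V E : Type*} [DecidableEq V] [DecidableEq E]
    [Fintype V] [Fintype E] (C : V → Finset E) (σ2 : Finset E → ℝ) (P : Finset (Finset V)) :
    attackerPayoff C (fun S => if S ∈ P then ((P.card : ℝ))⁻¹ else 0) σ2
      = ∑ T : Finset E, σ2 T * ((P.card : ℝ)⁻¹ *
          ∑ S ∈ P, ((T.card : ℝ) - ((S.biUnion C ∩ T).card : ℝ))) := by
  unfold attackerPayoff
  rw [Finset.sum_comm]
  refine Finset.sum_congr rfl fun T _ => ?_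
  rw [Finset.mul_sum, Finset.mul_sum]
  calc ∑ S : Finset V, (if S ∈ P then ((P.card : ℝ))⁻¹ else 0) * σ2 T *
        ((T.card : ℝ) - ((S.biUnion C ∩ T).card : ℝ))
      = ∑ S : Finset V, (if S ∈ P then
          σ2 T * ((P.card : ℝ)⁻¹ * ((T.card : ℝ) - ((S.biUnion C ∩ T).card : ℝ))) else 0) := by
        refine Finset.sum_congr rfl fun S _ => ?_
        split <;> ring
    _ = ∑ S ∈ Finset.univ ∩ P,
          σ2 T * ((P.card : ℝ)⁻¹ * ((T.card : ℝ) - ((S.biUnion C ∩ T).card : ℝ))) :=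
        Finset.sum_ite_mem _ _ _
    _ = _ := by rw [Finset.univ_inter]

lemma sumIndicatorAux {α : Type*} [DecidableEq α] (A : Finset α) (b : ℕ) (a : α) (ha : a ∈ A) :
    ∑ B ∈ A.powersetCard b, (if a ∈ B then (1:ℝ) else 0)
      = ((A.card.choose b - (A.card - 1).choose b : ℕ) : ℝ) := by
  rw [Finset.sum_boole, card_filter_mem A a ha b]

lemma sumCardInterAux {α : Type*} [DecidableEq α] (A X : Finset α) (b : ℕ) :
    ∑ T ∈ A.powersetCard b, ((X ∩ T).card : ℝ)
      = ((X ∩ A).card : ℝ) * ((A.card.choose b - (A.card - 1).choose b : ℕ) : ℝ) := by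
  calc ∑ T ∈ A.powersetCard b, ((X ∩ T).card : ℝ)
      = ∑ T ∈ A.powersetCard b, ∑ e ∈ X ∩ A, (if e ∈ T then (1:ℝ) else 0) := by
        refine Finset.sum_congr rfl fun T hT => ?_
        have hTsub : T ⊆ A := (Finset.mem_powersetCard.mp hT).1
        have hxt : X ∩ T = (X ∩ A).filter (fun e => e ∈ T) := by
          ext e
          simp only [Finset.mem_inter, Finset.mem_filter]
          exact ⟨fun ⟨hx, ht⟩ => ⟨⟨hx, hTsub ht⟩, ht⟩, fun ⟨⟨hx, _⟩, ht⟩ => ⟨hx, ht⟩⟩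
        rw [hxt, Finset.card_filter]
        push_cast
        rfl
    _ = ∑ e ∈ X ∩ A, ∑ T ∈ A.powersetCard b, (if e ∈ T then (1:ℝ) else 0) := Finset.sum_comm
    _ = ∑ e ∈ X ∩ A, ((A.card.choose b - (A.card - 1).choose b : ℕ) : ℝ) := by
        refine Finset.sum_congr rfl fun e he => ?_
        exact sumIndicatorAux A b e (Finset.mem_of_mem_inter_right he)
    _ = _ := by rw [Finset.sum_const, nsmul_eq_mul]


set_option maxHeartbeats 1000000 in
theorem equilibrium_value_bounds {V E : Type*} [DecidableEq V] [DecidableEq E]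
    [Fintype V] [Fintype E] (C : V → Finset E) (b₁ b₂ nstar mstar : ℕ)
    (hmon : ∀ e : E, ∃ i : V, e ∈ C i)
    (Smin : Finset V) (hScover : ∀ e : E, ∃ i ∈ Smin, e ∈ C i)
    (hScard : Smin.card = nstar)
    (hSmin : ∀ S : Finset V, (∀ e : E, ∃ i ∈ S, e ∈ C i) → nstar ≤ S.card)
    (Tmax : Finset E) (hTpack : ∀ i : V, (C i ∩ Tmax).card ≤ 1)
    (hTcard : Tmax.card = mstar)
    (hTmax : ∀ T : Finset E, (∀ i : V, (C i ∩ T).card ≤ 1) → T.card ≤ mstar)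
    (hb1 : b₁ < nstar) (hb2a : 1 ≤ b₂) (hb2 : b₂ ≤ mstar)
    (σ1 : Finset V → ℝ) (σ2 : Finset E → ℝ)
    (h1 : IsMixed b₁ σ1) (h2 : IsMixed b₂ σ2)
    (hNE1 : ∀ τ1 : Finset V → ℝ, IsMixed b₁ τ1 →
      attackerPayoff C σ1 σ2 ≤ attackerPayoff C τ1 σ2)
    (hNE2 : ∀ τ2 : Finset E → ℝ, IsMixed b₂ τ2 →
      attackerPayoff C σ1 τ2 ≤ attackerPayoff C σ1 σ2) :
    max 0 ((b₂ : ℝ) * (1 - (b₁ : ℝ) / mstar)) ≤ attackerPayoff C σ1 σ2 ∧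
      attackerPayoff C σ1 σ2 ≤ (b₂ : ℝ) * (1 - (b₁ : ℝ) / nstar) := by
  classical
  obtain ⟨h1n, h1s, h1c⟩ := h1
  obtain ⟨h2n, h2s, h2c⟩ := h2
  have hm1 : 1 ≤ mstar := hb2a.trans hb2
  have hn1 : 1 ≤ nstar := by omega
  have hmR : (0:ℝ) < (mstar : ℝ) := by exact_mod_cast hm1
  have hnR : (0:ℝ) < (nstar : ℝ) := by exact_mod_cast hn1
  -- Part 0 : 0 ≤ v
  have hzero : (0:ℝ) ≤ attackerPayoff C σ1 σ2 := by
    have hmix : IsMixed b₂ (fun T => if T = (∅:Finset E) then (1:ℝ) else 0) := by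
      refine ⟨fun A => by dsimp; split <;> norm_num, by simp, fun A hA => ?_⟩
      by_cases h : A = ∅
      · simp [h]
      · simp [h] at hA
    have h := hNE2 _ hmix
    have heq : attackerPayoff C σ1 (fun T => if T = (∅:Finset E) then (1:ℝ) else 0) = 0 := by
      unfold attackerPayoff
      refine Finset.sum_eq_zero fun S _ => Finset.sum_eq_zero fun T _ => ?_
      by_cases hT : T = ∅
      · subst hT; simp
      · simp [hT]
    linarith
  -- Part 1 : lower bound b₂ (1 - b₁/mstar) ≤ v
  have hc2 : Tmax.card.choose b₂ - (Tmax.card - 1).choose b₂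
      = mstar.choose b₂ - (mstar - 1).choose b₂ := by rw [hTcard]
  have hN : (Tmax.powersetCard b₂).card = mstar.choose b₂ := by
    rw [Finset.card_powersetCard, hTcard]
  have hNpos : 0 < (Tmax.powersetCard b₂).card := by
    rw [hN]; exact Nat.choose_pos hb2
  have hNR : (0:ℝ) < ((Tmax.powersetCard b₂).card : ℝ) := by exact_mod_cast hNpos
  have hid2 : mstar * (mstar.choose b₂ - (mstar-1).choose b₂) = b₂ * mstar.choose b₂ :=
    nat_identity mstar b₂ hb2 hm1
  have hlow : (b₂:ℝ) * (1 - (b₁:ℝ)/mstar) ≤ attackerPayoff C σ1 σ2 := by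
    have hmix2 := uniform_isMixed Tmax b₂ (by rw [hTcard]; exact hb2)
    refine le_trans ?_ (hNE2 _ hmix2)
    rw [payoff_uniform_right]
    -- pointwise bound on the inner average
    have hkey : ∀ S : Finset V, S.card ≤ b₁ →
        (b₂:ℝ) * (1 - (b₁:ℝ)/mstar) ≤ ((Tmax.powersetCard b₂).card : ℝ)⁻¹ *
          ∑ T ∈ Tmax.powersetCard b₂, ((T.card : ℝ) - ((S.biUnion C ∩ T).card : ℝ)) := by
      intro S hS
      have hsum : ∑ T ∈ Tmax.powersetCard b₂, ((T.card : ℝ) - ((S.biUnion C ∩ T).card : ℝ))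
          ≥ ((Tmax.powersetCard b₂).card : ℝ) * b₂
            - ((mstar.choose b₂ - (mstar-1).choose b₂ : ℕ) : ℝ) * b₁ := by
        rw [Finset.sum_sub_distrib]
        have e1 : ∑ T ∈ Tmax.powersetCard b₂, ((T.card : ℝ))
            = ((Tmax.powersetCard b₂).card : ℝ) * b₂ := by
          rw [Finset.sum_congr rfl (fun T hT => by
            rw [(Finset.mem_powersetCard.mp hT).2]), Finset.sum_const, nsmul_eq_mul]
        rw [e1, sumCardInterAux, hc2]
        have hcard : ((S.biUnion C ∩ Tmax).card : ℝ) ≤ (b₁ : ℝ) := by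
          have : S.biUnion C ∩ Tmax = S.biUnion (fun i => C i ∩ Tmax) := by
            ext e
            simp only [Finset.mem_inter, Finset.mem_biUnion]
            tauto
          have h2 : (S.biUnion C ∩ Tmax).card ≤ b₁ := by
            rw [this]
            calc (S.biUnion fun i => C i ∩ Tmax).card
                ≤ ∑ i ∈ S, (C i ∩ Tmax).card := Finset.card_biUnion_le
              _ ≤ ∑ i ∈ S, 1 := Finset.sum_le_sum fun i _ => hTpack i
              _ = S.card := by simp
              _ ≤ b₁ := hS
          exact_mod_cast h2
        have hnn : (0:ℝ) ≤ ((mstar.choose b₂ - (mstar-1).choose b₂ : ℕ) : ℝ) := by positivity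
        nlinarith
      have heq : ((Tmax.powersetCard b₂).card : ℝ)⁻¹ *
          (((Tmax.powersetCard b₂).card : ℝ) * b₂
            - ((mstar.choose b₂ - (mstar-1).choose b₂ : ℕ) : ℝ) * b₁)
          = (b₂:ℝ) * (1 - (b₁:ℝ)/mstar) := by
        have hidR : (mstar : ℝ) * ((mstar.choose b₂ - (mstar-1).choose b₂ : ℕ) : ℝ)
            = (b₂ : ℝ) * ((Tmax.powersetCard b₂).card : ℝ) := by
          rw [hN]; exact_mod_cast hid2
        have hdiv : ((mstar.choose b₂ - (mstar-1).choose b₂ : ℕ) : ℝ)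
            / ((Tmax.powersetCard b₂).card : ℝ) = (b₂ : ℝ) / mstar := by
          rw [div_eq_div_iff hNR.ne' hmR.ne']
          linear_combination hidR
        calc ((Tmax.powersetCard b₂).card : ℝ)⁻¹ *
            (((Tmax.powersetCard b₂).card : ℝ) * b₂
              - ((mstar.choose b₂ - (mstar-1).choose b₂ : ℕ) : ℝ) * b₁)
            = (b₂:ℝ) - (((mstar.choose b₂ - (mstar-1).choose b₂ : ℕ) : ℝ)
              / ((Tmax.powersetCard b₂).card : ℝ)) * b₁ := by
              have hne : ((Tmax.card.choose b₂ : ℕ) : ℝ) ≠ 0 := by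
                rw [← Finset.card_powersetCard]; exact hNR.ne'
              field_simp
          _ = (b₂:ℝ) - ((b₂:ℝ)/mstar) * b₁ := by rw [hdiv]
          _ = (b₂:ℝ) * (1 - (b₁:ℝ)/mstar) := by ring
      rw [← heq]
      exact mul_le_mul_of_nonneg_left hsum (by positivity)
    calc (b₂:ℝ) * (1 - (b₁:ℝ)/mstar)
        = ∑ S : Finset V, σ1 S * ((b₂:ℝ) * (1 - (b₁:ℝ)/mstar)) := by
          rw [← Finset.sum_mul, h1s, one_mul]
      _ ≤ _ := by
          refine Finset.sum_le_sum fun S _ => ?_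
          by_cases hσ : σ1 S = 0
          · simp [hσ]
          · exact mul_le_mul_of_nonneg_left (hkey S (h1c S hσ)) (h1n S)
  -- Part 2 : upper bound
  have hc1 : Smin.card.choose b₁ - (Smin.card - 1).choose b₁
      = nstar.choose b₁ - (nstar - 1).choose b₁ := by rw [hScard]
  have hM : (Smin.powersetCard b₁).card = nstar.choose b₁ := by
    rw [Finset.card_powersetCard, hScard]
  have hMpos : 0 < (Smin.powersetCard b₁).card := by
    rw [hM]; exact Nat.choose_pos hb1.le
  have hMR : (0:ℝ) < ((Smin.powersetCard b₁).card : ℝ) := by exact_mod_cast hMpos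
  have hid1 : nstar * (nstar.choose b₁ - (nstar-1).choose b₁) = b₁ * nstar.choose b₁ :=
    nat_identity nstar b₁ hb1.le hn1
  have hc1le : (nstar.choose b₁ - (nstar-1).choose b₁ : ℕ) ≤ nstar.choose b₁ := Nat.sub_le _ _
  have hupp : attackerPayoff C σ1 σ2 ≤ (b₂:ℝ) * (1 - (b₁:ℝ)/nstar) := by
    choose f hf1 hf2 using hScover
    have hmix1 := uniform_isMixed Smin b₁ (by rw [hScard]; exact hb1.le)
    refine le_trans (hNE1 _ hmix1) ?_
    rw [payoff_uniform_left]
    have hkey : ∀ T : Finset E, T.card ≤ b₂ →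
        ((Smin.powersetCard b₁).card : ℝ)⁻¹ *
          ∑ S ∈ Smin.powersetCard b₁, ((T.card : ℝ) - ((S.biUnion C ∩ T).card : ℝ))
          ≤ (b₂:ℝ) * (1 - (b₁:ℝ)/nstar) := by
      intro T hT
      have hsum : ∑ S ∈ Smin.powersetCard b₁, ((T.card : ℝ) - ((S.biUnion C ∩ T).card : ℝ))
          ≤ (b₂:ℝ) * (((Smin.powersetCard b₁).card : ℝ)
            - ((nstar.choose b₁ - (nstar-1).choose b₁ : ℕ) : ℝ)) := by
        rw [Finset.sum_sub_distrib]
        have e1 : ∑ S ∈ Smin.powersetCard b₁, ((T.card : ℝ))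
            = ((Smin.powersetCard b₁).card : ℝ) * T.card := by
          rw [Finset.sum_const, nsmul_eq_mul]
        have e2 : ∑ S ∈ Smin.powersetCard b₁, ((S.biUnion C ∩ T).card : ℝ)
            ≥ (T.card : ℝ) * ((nstar.choose b₁ - (nstar-1).choose b₁ : ℕ) : ℝ) := by
          have step : ∀ S ∈ Smin.powersetCard b₁,
              ∑ e ∈ T, (if f e ∈ S then (1:ℝ) else 0) ≤ ((S.biUnion C ∩ T).card : ℝ) := by
            intro S _
            have hsub : T.filter (fun e => f e ∈ S) ⊆ S.biUnion C ∩ T := by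
              intro e he
              obtain ⟨heT, hfe⟩ := Finset.mem_filter.mp he
              exact Finset.mem_inter.mpr ⟨Finset.mem_biUnion.mpr ⟨f e, hfe, hf2 e⟩, heT⟩
            have := Finset.card_le_card hsub
            calc ∑ e ∈ T, (if f e ∈ S then (1:ℝ) else 0)
                = ((T.filter (fun e => f e ∈ S)).card : ℝ) := by
                  rw [Finset.sum_boole]
              _ ≤ _ := by exact_mod_cast this
          calc ∑ S ∈ Smin.powersetCard b₁, ((S.biUnion C ∩ T).card : ℝ)
              ≥ ∑ S ∈ Smin.powersetCard b₁, ∑ e ∈ T, (if f e ∈ S then (1:ℝ) else 0) :=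
                Finset.sum_le_sum step
            _ = ∑ e ∈ T, ∑ S ∈ Smin.powersetCard b₁, (if f e ∈ S then (1:ℝ) else 0) :=
                Finset.sum_comm
            _ = ∑ e ∈ T, ((nstar.choose b₁ - (nstar-1).choose b₁ : ℕ) : ℝ) := by
                refine Finset.sum_congr rfl fun e _ => ?_
                rw [sumIndicatorAux Smin b₁ (f e) (hf1 e), hc1]
            _ = (T.card : ℝ) * ((nstar.choose b₁ - (nstar-1).choose b₁ : ℕ) : ℝ) := by
                rw [Finset.sum_const, nsmul_eq_mul]
        have hTb : (T.card : ℝ) ≤ (b₂ : ℝ) := by exact_mod_cast hT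
        have hMc : ((nstar.choose b₁ - (nstar-1).choose b₁ : ℕ) : ℝ)
            ≤ ((Smin.powersetCard b₁).card : ℝ) := by
          rw [hM]; exact_mod_cast hc1le
        nlinarith [Nat.cast_nonneg (α := ℝ) T.card,
          Nat.cast_nonneg (α := ℝ) (nstar.choose b₁ - (nstar-1).choose b₁)]
      have heq : ((Smin.powersetCard b₁).card : ℝ)⁻¹ *
          ((b₂:ℝ) * (((Smin.powersetCard b₁).card : ℝ)
            - ((nstar.choose b₁ - (nstar-1).choose b₁ : ℕ) : ℝ)))
          = (b₂:ℝ) * (1 - (b₁:ℝ)/nstar) := by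
        have hidR : (nstar : ℝ) * ((nstar.choose b₁ - (nstar-1).choose b₁ : ℕ) : ℝ)
            = (b₁ : ℝ) * ((Smin.powersetCard b₁).card : ℝ) := by
          rw [hM]; exact_mod_cast hid1
        have hdiv : ((nstar.choose b₁ - (nstar-1).choose b₁ : ℕ) : ℝ)
            / ((Smin.powersetCard b₁).card : ℝ) = (b₁ : ℝ) / nstar := by
          rw [div_eq_div_iff hMR.ne' hnR.ne']
          linear_combination hidR
        calc ((Smin.powersetCard b₁).card : ℝ)⁻¹ *
            ((b₂:ℝ) * (((Smin.powersetCard b₁).card : ℝ)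
              - ((nstar.choose b₁ - (nstar-1).choose b₁ : ℕ) : ℝ)))
            = (b₂:ℝ) * (1 - ((nstar.choose b₁ - (nstar-1).choose b₁ : ℕ) : ℝ)
              / ((Smin.powersetCard b₁).card : ℝ)) := by
              have hne : ((Smin.card.choose b₁ : ℕ) : ℝ) ≠ 0 := by
                rw [← Finset.card_powersetCard]; exact hMR.ne'
              field_simp
          _ = (b₂:ℝ) * (1 - (b₁:ℝ)/nstar) := by rw [hdiv]
      rw [← heq]
      exact mul_le_mul_of_nonneg_left hsum (by positivity)
    calc ∑ T : Finset E, σ2 T * (((Smin.powersetCard b₁).card : ℝ)⁻¹ *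
          ∑ S ∈ Smin.powersetCard b₁, ((T.card : ℝ) - ((S.biUnion C ∩ T).card : ℝ)))
        ≤ ∑ T : Finset E, σ2 T * ((b₂:ℝ) * (1 - (b₁:ℝ)/nstar)) := by
          refine Finset.sum_le_sum fun T _ => ?_
          by_cases hσ : σ2 T = 0
          · simp [hσ]
          · exact mul_le_mul_of_nonneg_left (hkey T (h2c T hσ)) (h2n T)
      _ = (b₂:ℝ) * (1 - (b₁:ℝ)/nstar) := by rw [← Finset.sum_mul, h2s, one_mul]
  exact ⟨max_le hzero hlow, hupp⟩
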